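/- Fix n ∈ ℕ, r ∈ ℕ, a positive definite quadratic form g on ℝ^d with |j|_g² := g(j,j), and γ > 0. Let μ be the product over j ∈ ℤ^d of the uniform probability measures on [−1/2, 1/2], a probability measure on A := [−1/2,1/2]^{ℤ^d}, and for a ∈ A define ω_j(a) := |j|_g² + a_j (1+|j|)^{−n}. For N ≥ 1 let ℤ^d_N := {j ∈ ℤ^d : |j| ≤ N}, and let k : ℤ^d_N → ℤ with 0 < Σ_{j∈ℤ^d_N} |k_j| ≤ r. Then μ{ a ∈ A : |Σ_{j∈ℤ^d_N} k_j ω_j(a)| < γ } ≤ 2γ(1+N)^n. -/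
import Mathlib


open scoped BigOperators
open MeasureTheory

namespace AG

abbrev Zd (d : ℕ) := Fin d → ℤ

noncomputable def enorm {d : ℕ} (j : Zd d) : ℝ := Real.sqrt (∑ i, ((j i : ℝ))^2)

/-- `|j|_g² = g(j,j)` for a quadratic form with coefficients `g`. -/
noncomputable def qform (d : ℕ) (g : Fin d → Fin d → ℝ) (j : Zd d) : ℝ :=
  ∑ i, ∑ k, g i k * (j i : ℝ) * (j k : ℝ)

/-- `μ` is the product over `j ∈ ℤ^d` of the uniform probability measures on
`[−1/2,1/2]`: on every finite cylinder it is given by the product of the uniform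
measures of the factors. -/
def IsCylinderUniform (d : ℕ) (μ : Measure (Zd d → ℝ)) : Prop :=
  ∀ (S : Finset (Zd d)) (t : Zd d → Set ℝ), (∀ j, MeasurableSet (t j)) →
    μ {a | ∀ j ∈ S, a j ∈ t j} =
      ∏ j ∈ S, volume (t j ∩ Set.Icc (-(1 : ℝ) / 2) (1 / 2))

/-- The NLS frequencies `ω_j(a) = |j|_g² + a_j (1+|j|)^{−n}`. -/
noncomputable def nlsFreq (d n : ℕ) (g : Fin d → Fin d → ℝ) (a : Zd d → ℝ)
    (j : Zd d) : ℝ :=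
  qform d g j + a j * (1 + enorm j) ^ (-(n : ℝ))

/-- Lemma `meas.nls`.
For a nonzero integer vector `k` supported on `|j| ≤ N` with `Σ|k_j| ≤ r`, the set of
potentials `a` with `|Σ k_j ω_j(a)| < γ` has product-uniform measure `≤ 2γ(1+N)^n`. -/
theorem stmt_11 (d : ℕ) (hd : 1 ≤ d) (n r : ℕ)
    (g : Fin d → Fin d → ℝ) (hsym : ∀ i k, g i k = g k i)
    (hpos : ∀ x : Fin d → ℝ, x ≠ 0 → 0 < ∑ i, ∑ k, g i k * x i * x k)
    (γ : ℝ) (hγ : 0 < γ)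
    (μ : Measure (Zd d → ℝ)) (hμ : IsCylinderUniform d μ)
    (N : ℕ) (hN : 1 ≤ N) (k : Zd d → ℤ)
    (hksupp : ∀ j, k j ≠ 0 → enorm j ≤ N)
    (hkfin : (Function.support k).Finite)
    (hkpos : 0 < ∑ᶠ j, (k j).natAbs) (hkr : ∑ᶠ j, (k j).natAbs ≤ r) :
    μ {a : Zd d → ℝ | |∑ᶠ j : Zd d, (k j : ℝ) * nlsFreq d n g a j| < γ}
      ≤ ENNReal.ofReal (2 * γ * (1 + (N : ℝ)) ^ n) := by
  classical
  have henn : ∀ j : Zd d, 0 ≤ enorm j := fun j => Real.sqrt_nonneg _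
  set c : Zd d → ℝ := fun j => (1 + enorm j) ^ (-(n : ℝ)) with hc
  have hcpos : ∀ j, 0 < c j := fun j =>
    Real.rpow_pos_of_pos (by linarith [henn j]) _
  obtain ⟨j₀, hj₀⟩ : ∃ j, k j ≠ 0 := by
    by_contra h
    push_neg at h
    have h0 : ∑ᶠ j, (k j).natAbs = 0 :=
      finsum_eq_zero_of_forall_eq_zero fun j => by simp [h j]
    omega
  set S : Finset (Zd d) := hkfin.toFinset with hS
  have hj₀S : j₀ ∈ S := by simpa [hS] using hj₀
  set unif : Measure ℝ := volume.restrict (Set.Icc (-(1 : ℝ) / 2) (1 / 2)) with hunif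
  haveI hunifP : IsProbabilityMeasure unif := by
    constructor
    rw [hunif, Measure.restrict_apply MeasurableSet.univ, Set.univ_inter, Real.volume_Icc]
    norm_num
  set π : (Zd d → ℝ) → (↥S → ℝ) := fun a j => a ↑j with hπdef
  have hπ : Measurable π := measurable_pi_lambda _ fun j => measurable_pi_apply _
  -- Step 1: the pushforward of μ to the coordinates in S is the product of uniform measures
  have hν : Measure.pi (fun _ : ↥S => unif) = μ.map π := by
    apply Measure.pi_eq
    intro s hs
    rw [Measure.map_apply hπ (MeasurableSet.univ_pi hs)]
    set t : Zd d → Set ℝ := fun j => if h : j ∈ S then s ⟨j, h⟩ else Set.univ with ht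
    have htm : ∀ j, MeasurableSet (t j) := by
      intro j
      by_cases h : j ∈ S <;> simp [ht, h, hs]
    have hpre : π ⁻¹' Set.pi Set.univ s = {a | ∀ j ∈ S, a j ∈ t j} := by
      ext a
      simp only [Set.mem_preimage, Set.mem_pi, Set.mem_univ, forall_true_left,
        Set.mem_setOf_eq]
      constructor
      · intro h j hj
        simpa [ht, hj] using h ⟨j, hj⟩
      · intro h j
        simpa [ht, j.2] using h (↑j) j.2
    rw [hpre, hμ S t htm]
    rw [← Finset.prod_attach S (fun j => volume (t j ∩ Set.Icc (-(1 : ℝ) / 2) (1 / 2))),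
      Finset.prod_coe_sort_eq_attach]
    apply Finset.prod_congr rfl
    intro i _
    rw [hunif, Measure.restrict_apply (hs i)]
    congr 1
    simp [ht, i.2]
  set q : Zd d → ℝ := qform d g with hq
  set F : (↥S → ℝ) → ℝ := fun x => ∑ i : ↥S, (k ↑i : ℝ) * (q ↑i + x i * c ↑i) with hF
  have hFmeas : Measurable F := by
    apply Finset.measurable_sum
    intro i _
    exact (((measurable_pi_apply i).mul_const _).const_add _).const_mul _
  set B : Set (↥S → ℝ) := {x | |F x| < γ} with hB
  have hBm : MeasurableSet B := measurableSet_lt hFmeas.abs measurable_const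
  -- Step 2: the target set is the preimage of B
  have hset : {a : Zd d → ℝ | |∑ᶠ j : Zd d, (k j : ℝ) * nlsFreq d n g a j| < γ}
      = π ⁻¹' B := by
    ext a
    simp only [Set.mem_setOf_eq, Set.mem_preimage, hB]
    have h1 : ∑ᶠ j : Zd d, (k j : ℝ) * nlsFreq d n g a j
        = ∑ j ∈ S, (k j : ℝ) * nlsFreq d n g a j := by
      apply finsum_eq_finset_sum_of_support_subset
      intro j hj
      simp only [Function.mem_support] at hj
      have hkj : k j ≠ 0 := by
        intro h0
        exact hj (by simp [h0])
      simpa [hS] using hkj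
    have h2 : F (π a) = ∑ j ∈ S, (k j : ℝ) * nlsFreq d n g a j :=
      Finset.sum_coe_sort S (fun j => (k j : ℝ) * nlsFreq d n g a j)
    rw [h1, ← h2]
  rw [hset, ← Measure.map_apply hπ hBm, ← hν]
  -- Step 3: slice the product measure along the coordinate j₀
  set i₀ : ↥S := ⟨j₀, hj₀S⟩ with hi₀
  set p : ↥S → Prop := fun i => i ≠ i₀ with hp
  haveI hu : Unique {i : ↥S // ¬ p i} :=
    { default := ⟨i₀, not_not_intro rfl⟩
      uniq := fun y => Subtype.ext (not_not.mp y.2) }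
  have hmp := measurePreserving_piEquivPiSubtypeProd (fun _ : ↥S => unif) p
  set e := MeasurableEquiv.piEquivPiSubtypeProd (fun _ : ↥S => ℝ) p with he
  have hBm' : MeasurableSet (e.symm ⁻¹' B) := e.symm.measurable hBm
  have hBeq : Measure.pi (fun _ : ↥S => unif) B
      = ((Measure.pi fun _ : Subtype p => unif).prod
          (Measure.pi fun _ : {i : ↥S // ¬ p i} => unif)) (e.symm ⁻¹' B) := by
    rw [← hmp.measure_preimage hBm'.nullMeasurableSet]
    congr 1
    ext x
    simp
  rw [hBeq, Measure.prod_apply hBm']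
  -- the constant `t`
  set t : ℝ := (k j₀ : ℝ) * c j₀ with htdef
  have ht0 : t ≠ 0 := mul_ne_zero (Int.cast_ne_zero.mpr hj₀) (ne_of_gt (hcpos j₀))
  have htabs : ((1 + (N : ℝ)) ^ n)⁻¹ ≤ |t| := by
    rw [htdef, abs_mul]
    have h1 : (1 : ℝ) ≤ |(k j₀ : ℝ)| := by
      rw [← Int.cast_abs]
      exact_mod_cast Int.one_le_abs hj₀
    have h2 : ((1 + (N : ℝ)) ^ n)⁻¹ ≤ |c j₀| := by
      rw [abs_of_pos (hcpos j₀)]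
      have hbase : (0 : ℝ) < 1 + enorm j₀ := by linarith [henn j₀]
      have hle : (1 : ℝ) + enorm j₀ ≤ 1 + N := by linarith [hksupp j₀ hj₀]
      have hmono := Real.rpow_le_rpow_of_nonpos hbase hle
        (neg_nonpos.mpr (Nat.cast_nonneg n))
      calc ((1 + (N : ℝ)) ^ n)⁻¹ = (1 + (N : ℝ)) ^ (-(n : ℝ)) := by
            rw [Real.rpow_neg (by positivity), Real.rpow_natCast]
        _ ≤ c j₀ := hmono
    calc ((1 + (N : ℝ)) ^ n)⁻¹ = 1 * ((1 + (N : ℝ)) ^ n)⁻¹ := (one_mul _).symm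
      _ ≤ |(k j₀ : ℝ)| * |c j₀| := by
          apply mul_le_mul h1 h2 (by positivity)
          linarith
  have htpos : (0 : ℝ) < |t| := abs_pos.mpr ht0
  -- Step 4: each slice has small measure
  have hslice : ∀ x : Subtype p → ℝ,
      (Measure.pi fun _ : {i : ↥S // ¬ p i} => unif) (Prod.mk x ⁻¹' (e.symm ⁻¹' B))
        ≤ ENNReal.ofReal (2 * γ * (1 + (N : ℝ)) ^ n) := by
    intro x
    set Cst : ℝ := (∑ i ∈ Finset.univ.erase i₀,
      (k ↑i : ℝ) * (q ↑i + (e.symm (x, fun _ => (0:ℝ))) i * c ↑i)) + (k j₀ : ℝ) * q j₀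
      with hCst
    have hkey : ∀ y : {i : ↥S // ¬ p i} → ℝ,
        F (e.symm (x, y)) = Cst + t * y default := by
      intro y
      have hz : ∀ (i : ↥S), i ≠ i₀ →
          (e.symm (x, y)) i = (e.symm (x, fun _ => (0:ℝ))) i := by
        intro i hi
        show (Equiv.piEquivPiSubtypeProd p (fun _ : ↥S => ℝ)).symm (x, y) i
          = (Equiv.piEquivPiSubtypeProd p (fun _ : ↥S => ℝ)).symm (x, fun _ => (0:ℝ)) i
        simp only [Equiv.piEquivPiSubtypeProd_symm_apply]
        rw [dif_pos hi, dif_pos hi]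
      have hz0 : (e.symm (x, y)) i₀ = y default := by
        show (Equiv.piEquivPiSubtypeProd p (fun _ : ↥S => ℝ)).symm (x, y) i₀ = y default
        simp only [Equiv.piEquivPiSubtypeProd_symm_apply]
        rw [dif_neg (not_not_intro rfl)]
        exact congrArg y (Subsingleton.elim _ _)
      show ∑ i : ↥S, (k ↑i : ℝ) * (q ↑i + (e.symm (x, y)) i * c ↑i) = Cst + t * y default
      rw [← Finset.sum_erase_add Finset.univ _ (Finset.mem_univ i₀)]
      have hterm : (k ↑i₀ : ℝ) * (q ↑i₀ + (e.symm (x, y)) i₀ * c ↑i₀)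
          = (k j₀ : ℝ) * q j₀ + t * y default := by
        rw [hz0]
        show (k j₀ : ℝ) * (q j₀ + y default * c j₀) = (k j₀ : ℝ) * q j₀ + t * y default
        rw [htdef]; ring
      rw [hterm]
      have hrest : ∑ i ∈ Finset.univ.erase i₀,
          (k ↑i : ℝ) * (q ↑i + (e.symm (x, y)) i * c ↑i)
          = ∑ i ∈ Finset.univ.erase i₀,
          (k ↑i : ℝ) * (q ↑i + (e.symm (x, fun _ => (0:ℝ))) i * c ↑i) := by
        apply Finset.sum_congr rfl
        intro i hi
        rw [hz i (Finset.ne_of_mem_erase hi)]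
      rw [hrest, hCst]
      ring
    have hball : ∀ u : ℝ, |Cst + t * u| < γ → u ∈ Metric.ball (-(Cst / t)) (γ / |t|) := by
      intro u hu
      rw [Metric.mem_ball, Real.dist_eq, lt_div_iff₀ htpos, ← abs_mul]
      have heq : (u - -(Cst / t)) * t = Cst + t * u := by
        field_simp
        ring
      rw [heq]
      exact hu
    have hsub2 : Prod.mk x ⁻¹' (e.symm ⁻¹' B)
        ⊆ Set.pi Set.univ
            (fun _ : {i : ↥S // ¬ p i} => Metric.ball (-(Cst / t)) (γ / |t|)) := by
      intro y hy
      have hy' : |Cst + t * y default| < γ := by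
        have h3 : |F (e.symm (x, y))| < γ := hy
        rwa [hkey y] at h3
      intro i _
      have hyd : y i = y default := congrArg y (Subsingleton.elim _ _)
      rw [hyd]
      exact hball _ hy'
    calc (Measure.pi fun _ : {i : ↥S // ¬ p i} => unif) (Prod.mk x ⁻¹' (e.symm ⁻¹' B))
        ≤ (Measure.pi fun _ : {i : ↥S // ¬ p i} => unif)
            (Set.pi Set.univ fun _ => Metric.ball (-(Cst / t)) (γ / |t|)) :=
          measure_mono hsub2
      _ = ∏ _i : {i : ↥S // ¬ p i}, unif (Metric.ball (-(Cst / t)) (γ / |t|)) :=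
          Measure.pi_pi _ _
      _ = unif (Metric.ball (-(Cst / t)) (γ / |t|)) := by simp
      _ = volume (Metric.ball (-(Cst / t)) (γ / |t|) ∩ Set.Icc (-(1:ℝ)/2) (1/2)) := by
          rw [hunif, Measure.restrict_apply measurableSet_ball]
      _ ≤ volume (Metric.ball (-(Cst / t)) (γ / |t|)) :=
          measure_mono Set.inter_subset_left
      _ = ENNReal.ofReal (2 * (γ / |t|)) := Real.volume_ball _ _
      _ ≤ ENNReal.ofReal (2 * γ * (1 + (N : ℝ)) ^ n) := by
          apply ENNReal.ofReal_le_ofReal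
          rw [mul_assoc]
          apply mul_le_mul_of_nonneg_left _ (by norm_num : (0:ℝ) ≤ 2)
          rw [div_le_iff₀ htpos]
          calc γ = γ * ((1 + (N : ℝ)) ^ n * ((1 + (N : ℝ)) ^ n)⁻¹) := by
                rw [mul_inv_cancel₀ (by positivity), mul_one]
            _ ≤ γ * ((1 + (N : ℝ)) ^ n * |t|) := by
                apply mul_le_mul_of_nonneg_left _ (le_of_lt hγ)
                exact mul_le_mul_of_nonneg_left htabs (by positivity)
            _ = γ * (1 + (N : ℝ)) ^ n * |t| := by ring
  -- Step 5: integrate the slice bound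
  calc ∫⁻ x, (Measure.pi fun _ : {i : ↥S // ¬ p i} => unif)
        (Prod.mk x ⁻¹' (e.symm ⁻¹' B)) ∂(Measure.pi fun _ : Subtype p => unif)
      ≤ ∫⁻ _, ENNReal.ofReal (2 * γ * (1 + (N : ℝ)) ^ n)
          ∂(Measure.pi fun _ : Subtype p => unif) := lintegral_mono hslice
    _ = ENNReal.ofReal (2 * γ * (1 + (N : ℝ)) ^ n) := by
        rw [lintegral_const, measure_univ, mul_one]

end AG
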